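/- arXiv:2407.05432 — 3 statements merged into one kernel-verified Lean document; each statement's English description precedes it below -/
import Mathlib

section
/- For p ≥ 2 and λ ≥ 0, define H_γ(ξ) = (|ξ|−λ)₊^γ ξ/|ξ| for ξ ≠ 0 and H_γ(0) = 0. Then for all ξ, η ∈ ℝⁿ: ⟨H_{p−1}(ξ) − H_{p−1}(η), ξ − η⟩ ≥ (4/p²) |H_{p/2}(ξ) − H_{p/2}(η)|². -/
set_option maxHeartbeats 1000000

open Real

lemma core_ineq (p r : ℝ) (hp : 2 ≤ p) (hr0 : 0 ≤ r) (hr1 : r ≤ 1) :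
    4 * (1 - r ^ (p / 2)) ^ 2 ≤ p ^ 2 * ((1 - r ^ (p - 1)) * (1 - r)) := by
  have hp0 : (0:ℝ) < p := by linarith
  set s := r ^ (p / 2) with hs
  set t := r ^ (p - 1) with ht
  have h1 : 2 * (1 - s) ≤ p * (1 - r) := by
    have hb := one_add_mul_self_le_rpow_one_add (s := r - 1) (by linarith) (p := p / 2) (by linarith)
    have : 1 + (p/2) * (r - 1) ≤ s := by
      rw [hs]; convert hb using 2; ring
    nlinarith [this]
  have h2 : t ≤ s := by
    rcases eq_or_lt_of_le hr0 with h | h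
    · rw [hs, ht, ← h, Real.zero_rpow (by linarith), Real.zero_rpow (by linarith)]
    · exact Real.rpow_le_rpow_of_exponent_ge h hr1 (by linarith)
  have h3 : s ≤ 1 := Real.rpow_le_one hr0 hr1 (by linarith)
  have ht1 : t ≤ 1 := Real.rpow_le_one hr0 hr1 (by linarith)
  have hA : 2 * (1 - s) * (2 * (1 - s)) ≤ (p * (1 - r)) * (2 * (1 - s)) :=
    mul_le_mul_of_nonneg_right h1 (by linarith)
  have hB : (p * (1 - r)) * (2 * (1 - s)) ≤ (p * (1 - r)) * (2 * (1 - t)) :=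
    mul_le_mul_of_nonneg_left (by linarith) (by nlinarith)
  have hC : (p * (1 - r)) * (2 * (1 - t)) ≤ (p * (1 - r)) * (p * (1 - t)) :=
    mul_le_mul_of_nonneg_left (mul_le_mul_of_nonneg_right hp (by linarith)) (by nlinarith)
  nlinarith [hA, hB, hC]

lemma scalar1 (p x y : ℝ) (hp : 2 ≤ p) (hy : 0 ≤ y) (hyx : y ≤ x) :
    4 * (x ^ (p / 2) - y ^ (p / 2)) ^ 2 ≤ p ^ 2 * ((x ^ (p - 1) - y ^ (p - 1)) * (x - y)) := by
  have hx0 : 0 ≤ x := le_trans hy hyx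
  rcases eq_or_lt_of_le hx0 with h | h
  · have hx : x = 0 := h.symm
    have hyy : y = 0 := le_antisymm (hx ▸ hyx) hy
    rw [hx, hyy]; simp
  · set r := y / x with hr
    have hr0 : 0 ≤ r := div_nonneg hy h.le
    have hr1 : r ≤ 1 := (div_le_one h).2 hyx
    have hyr : y = r * x := by rw [hr, div_mul_cancel₀ y h.ne']
    have hyp2 : y ^ (p/2) = r ^ (p/2) * x ^ (p/2) := by
      rw [hyr, Real.mul_rpow hr0 h.le]
    have hyp1 : y ^ (p-1) = r ^ (p-1) * x ^ (p-1) := by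
      rw [hyr, Real.mul_rpow hr0 h.le]
    have hxp2 : x ^ (p/2) * x ^ (p/2) = x ^ p := by
      rw [← Real.rpow_add' h.le (ne_of_gt (by nlinarith : (0:ℝ) < p/2 + p/2))]
      congr 1; ring
    have hxp1 : x ^ (p-1) * x = x ^ p := by
      nth_rewrite 2 [show x = x ^ (1:ℝ) by rw [Real.rpow_one]]
      rw [← Real.rpow_add' h.le (ne_of_gt (by nlinarith : (0:ℝ) < (p-1) + 1))]
      congr 1; ring
    have hcore := core_ineq p r hp hr0 hr1
    have hXnn : 0 ≤ x ^ p := Real.rpow_nonneg h.le p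
    have hmul := mul_le_mul_of_nonneg_right hcore hXnn
    have e1 : (x ^ (p/2) - y ^ (p/2)) ^ 2 = (1 - r ^ (p/2)) ^ 2 * x ^ p := by
      rw [hyp2, ← hxp2]; ring
    have e2 : (x ^ (p-1) - y ^ (p-1)) * (x - y) = ((1 - r ^ (p-1)) * (1 - r)) * x ^ p := by
      rw [hyp1, hyr, ← hxp1]; ring
    rw [e1, e2]
    nlinarith [hmul]

lemma E1 (p x y a b : ℝ) (hp : 2 ≤ p) (hy : 0 ≤ y) (hyx : y ≤ x) (hab : x - y ≤ a - b) :
    4 * (x ^ (p / 2) - y ^ (p / 2)) ^ 2 ≤ p ^ 2 * ((x ^ (p - 1) - y ^ (p - 1)) * (a - b)) := by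
  have h1 := scalar1 p x y hp hy hyx
  have hPQ : y ^ (p-1) ≤ x ^ (p-1) :=
    Real.rpow_le_rpow hy hyx (by linarith)
  have h2 : (x ^ (p-1) - y ^ (p-1)) * (x - y) ≤ (x ^ (p-1) - y ^ (p-1)) * (a - b) :=
    mul_le_mul_of_nonneg_left hab (sub_nonneg.2 hPQ)
  have h3 := mul_le_mul_of_nonneg_left h2 (sq_nonneg p)
  calc 4 * (x ^ (p / 2) - y ^ (p / 2)) ^ 2 ≤ p ^ 2 * ((x ^ (p - 1) - y ^ (p - 1)) * (x - y)) := h1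
    _ ≤ p ^ 2 * ((x ^ (p - 1) - y ^ (p - 1)) * (a - b)) := h3

lemma E2 (p x y a b : ℝ) (hp : 2 ≤ p) (hx : 0 ≤ x) (hxa : x ≤ a) (hy : 0 ≤ y) (hyb : y ≤ b) :
    4 * (x ^ (p / 2) + y ^ (p / 2)) ^ 2 ≤ p ^ 2 * ((x ^ (p - 1) + y ^ (p - 1)) * (a + b)) := by
  have hq : ((p-1)/2) + ((p-1)/2) ≠ 0 := ne_of_gt (by nlinarith)
  have hh : ((1:ℝ)/2) + ((1:ℝ)/2) ≠ 0 := by norm_num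
  have hq2 : ((p-1)/2) + ((1:ℝ)/2) ≠ 0 := ne_of_gt (by nlinarith)
  have hxq : x ^ ((p-1)/2) * x ^ ((p-1)/2) = x ^ (p-1) := by
    rw [← Real.rpow_add' hx hq]; congr 1; ring
  have hyq : y ^ ((p-1)/2) * y ^ ((p-1)/2) = y ^ (p-1) := by
    rw [← Real.rpow_add' hy hq]; congr 1; ring
  have hxh : x ^ ((1:ℝ)/2) * x ^ ((1:ℝ)/2) = x := by
    rw [← Real.rpow_add' hx hh]; norm_num
  have hyh : y ^ ((1:ℝ)/2) * y ^ ((1:ℝ)/2) = y := by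
    rw [← Real.rpow_add' hy hh]; norm_num
  have hxm : x ^ ((p-1)/2) * x ^ ((1:ℝ)/2) = x ^ (p/2) := by
    rw [← Real.rpow_add' hx hq2]; congr 1; ring
  have hym : y ^ ((p-1)/2) * y ^ ((1:ℝ)/2) = y ^ (p/2) := by
    rw [← Real.rpow_add' hy hq2]; congr 1; ring
  have hpp : p / 2 + p / 2 ≠ 0 := ne_of_gt (by nlinarith)
  have hpm : (p - 1) + 1 ≠ 0 := ne_of_gt (by nlinarith)
  have hU2 : x ^ (p/2) * x ^ (p/2) = x ^ (p-1) * x := by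
    have e1 : x ^ (p/2) * x ^ (p/2) = x ^ p := by
      rw [← Real.rpow_add' hx hpp]; congr 1; ring
    have e2 : x ^ (p-1) * x = x ^ p := by
      nth_rewrite 2 [show x = x ^ (1:ℝ) by rw [Real.rpow_one]]
      rw [← Real.rpow_add' hx hpm]; congr 1; ring
    rw [e1, e2]
  have hV2 : y ^ (p/2) * y ^ (p/2) = y ^ (p-1) * y := by
    have e1 : y ^ (p/2) * y ^ (p/2) = y ^ p := by
      rw [← Real.rpow_add' hy hpp]; congr 1; ring
    have e2 : y ^ (p-1) * y = y ^ p := by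
      nth_rewrite 2 [show y = y ^ (1:ℝ) by rw [Real.rpow_one]]
      rw [← Real.rpow_add' hy hpm]; congr 1; ring
    rw [e1, e2]
  have hcross : 2 * (x ^ (p/2) * y ^ (p/2)) ≤ x ^ (p-1) * y + y ^ (p-1) * x := by
    have huu : (x ^ ((p-1)/2) * y ^ ((1:ℝ)/2)) * (x ^ ((p-1)/2) * y ^ ((1:ℝ)/2))
        = x ^ (p-1) * y := by
      rw [show (x ^ ((p-1)/2) * y ^ ((1:ℝ)/2)) * (x ^ ((p-1)/2) * y ^ ((1:ℝ)/2))
          = (x ^ ((p-1)/2) * x ^ ((p-1)/2)) * (y ^ ((1:ℝ)/2) * y ^ ((1:ℝ)/2)) from by ring,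
        hxq, hyh]
    have hvv : (y ^ ((p-1)/2) * x ^ ((1:ℝ)/2)) * (y ^ ((p-1)/2) * x ^ ((1:ℝ)/2))
        = y ^ (p-1) * x := by
      rw [show (y ^ ((p-1)/2) * x ^ ((1:ℝ)/2)) * (y ^ ((p-1)/2) * x ^ ((1:ℝ)/2))
          = (y ^ ((p-1)/2) * y ^ ((p-1)/2)) * (x ^ ((1:ℝ)/2) * x ^ ((1:ℝ)/2)) from by ring,
        hyq, hxh]
    have huv : (x ^ ((p-1)/2) * y ^ ((1:ℝ)/2)) * (y ^ ((p-1)/2) * x ^ ((1:ℝ)/2))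
        = x ^ (p/2) * y ^ (p/2) := by
      rw [show (x ^ ((p-1)/2) * y ^ ((1:ℝ)/2)) * (y ^ ((p-1)/2) * x ^ ((1:ℝ)/2))
          = (x ^ ((p-1)/2) * x ^ ((1:ℝ)/2)) * (y ^ ((p-1)/2) * y ^ ((1:ℝ)/2)) from by ring,
        hxm, hym]
    have hsq := sq_nonneg (x ^ ((p-1)/2) * y ^ ((1:ℝ)/2) - y ^ ((p-1)/2) * x ^ ((1:ℝ)/2))
    nlinarith [hsq, huu, hvv, huv]
  have hP0 : 0 ≤ x ^ (p-1) := Real.rpow_nonneg hx _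
  have hQ0 : 0 ≤ y ^ (p-1) := Real.rpow_nonneg hy _
  have hU0 : 0 ≤ x ^ (p/2) := Real.rpow_nonneg hx _
  have hV0 : 0 ≤ y ^ (p/2) := Real.rpow_nonneg hy _
  have hstep : (x ^ (p/2) + y ^ (p/2))^2 ≤ (x ^ (p-1) + y ^ (p-1)) * (x + y) := by
    nlinarith [hU2, hV2, hcross]
  have hstep2 : (x ^ (p-1) + y ^ (p-1)) * (x + y) ≤ (x ^ (p-1) + y ^ (p-1)) * (a + b) :=
    mul_le_mul_of_nonneg_left (by linarith) (by linarith)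
  have hPQab : 0 ≤ (x ^ (p-1) + y ^ (p-1)) * (a + b) :=
    mul_nonneg (by linarith) (by linarith)
  have hp4 : 4 ≤ p ^ 2 := by nlinarith
  have h4s := mul_le_mul_of_nonneg_left (le_trans hstep hstep2) (show (0:ℝ) ≤ 4 by norm_num)
  have h5 := mul_nonneg (by linarith : (0:ℝ) ≤ p ^ 2 - 4) hPQab
  nlinarith [h4s, h5]

lemma key (p a b c P Q U V : ℝ) (ha : 0 < a) (hb : 0 < b) (hc : |c| ≤ a * b)
    (hE1 : 4 * (U - V) ^ 2 ≤ p ^ 2 * ((P - Q) * (a - b)))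
    (hE2 : 4 * (U + V) ^ 2 ≤ p ^ 2 * ((P + Q) * (a + b))) :
    4 * (U ^ 2 - 2 * U * V * (c / (a * b)) + V ^ 2) ≤
      p ^ 2 * (P * a + Q * b - (P / a + Q / b) * c) := by
  have hab : 0 < a * b := mul_pos ha hb
  have hd1 : -1 ≤ c / (a*b) := by
    rw [le_div_iff₀ hab]; have := abs_le.1 hc; linarith [this.1]
  have hd2 : c / (a*b) ≤ 1 := by
    rw [div_le_one hab]; exact (abs_le.1 hc).2
  have hc2 : (P / a + Q / b) * c = (P * b + Q * a) * (c / (a * b)) := by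
    field_simp
  rw [hc2]
  set d := c / (a * b)
  nlinarith [mul_nonneg (by linarith : (0:ℝ) ≤ 1 - d) (sub_nonneg.2 hE1),
    mul_nonneg (by linarith : (0:ℝ) ≤ 1 + d) (sub_nonneg.2 hE2)]
-- MAIN (appended to a.lean content when testing)
open Classical in
noncomputable def Hfun (n : ℕ) (lam γ : ℝ) (ξ : EuclideanSpace ℝ (Fin n)) :
    EuclideanSpace ℝ (Fin n) :=
  if ξ = 0 then 0 else ((max (‖ξ‖ - lam) 0) ^ γ / ‖ξ‖) • ξ

lemma inner_comp (n : ℕ) (s t : ℝ) (ξ η : EuclideanSpace ℝ (Fin n)) :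
    (inner ℝ (s • ξ - t • η) (ξ - η) : ℝ)
      = s * ‖ξ‖ ^ 2 + t * ‖η‖ ^ 2 - (s + t) * (inner ℝ ξ η : ℝ) := by
  simp only [inner_sub_left, inner_sub_right, real_inner_smul_left,
    real_inner_self_eq_norm_sq, real_inner_comm η ξ]
  ring

lemma norm_comp (n : ℕ) (s t : ℝ) (hs : 0 ≤ s) (ht : 0 ≤ t)
    (ξ η : EuclideanSpace ℝ (Fin n)) :
    ‖s • ξ - t • η‖ ^ 2
      = s ^ 2 * ‖ξ‖ ^ 2 - 2 * s * t * (inner ℝ ξ η : ℝ) + t ^ 2 * ‖η‖ ^ 2 := by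
  rw [norm_sub_sq_real, norm_smul, norm_smul, real_inner_smul_left, real_inner_smul_right,
    Real.norm_eq_abs, Real.norm_eq_abs, abs_of_nonneg hs, abs_of_nonneg ht]
  ring

theorem H_monotonicity (n : ℕ) (p lam : ℝ) (hp : 2 ≤ p) (hlam : 0 ≤ lam)
    (ξ η : EuclideanSpace ℝ (Fin n)) :
    (inner ℝ (Hfun n lam (p - 1) ξ - Hfun n lam (p - 1) η) (ξ - η) : ℝ) ≥
      (4 / p ^ 2) * ‖Hfun n lam (p / 2) ξ - Hfun n lam (p / 2) η‖ ^ 2 := by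
  have hp0 : (0:ℝ) < p := by linarith
  have hp2 : (0:ℝ) < p ^ 2 := by positivity
  have hp2' : p / 2 ≠ 0 := by positivity
  have hp1' : p - 1 ≠ 0 := by intro h; linarith [h]
  rw [ge_iff_le, div_mul_eq_mul_div, div_le_iff₀ hp2]
  by_cases hξ : ξ = 0
  · by_cases hη : η = 0
    · subst hξ; subst hη
      simp [Hfun]
    · subst hξ
      have hb : 0 < ‖η‖ := norm_pos_iff.mpr hη
      set b := ‖η‖ with hbd
      set y := max (b - lam) 0 with hyd
      have hy0 : 0 ≤ y := le_max_right _ _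
      have hyb : y ≤ b := max_le (by linarith) hb.le
      simp only [Hfun, if_neg hη, if_true, eq_self_iff_true, zero_sub, norm_neg, inner_neg_neg]
      rw [real_inner_smul_left, real_inner_self_eq_norm_sq, norm_smul, Real.norm_eq_abs,
        abs_of_nonneg (div_nonneg (Real.rpow_nonneg hy0 _) hb.le), mul_pow]
      have e1 : (y ^ (p/2) / b) ^ 2 * b ^ 2 = (y ^ (p/2)) ^ 2 := by field_simp
      have e2 : y ^ (p-1) / b * b ^ 2 = y ^ (p-1) * b := by field_simp
      rw [e1, e2]
      have h2 := E2 p 0 y 0 b hp le_rfl le_rfl hy0 hyb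
      rw [Real.zero_rpow hp2', Real.zero_rpow hp1'] at h2
      nlinarith [h2]
  · by_cases hη : η = 0
    · subst hη
      have ha : 0 < ‖ξ‖ := norm_pos_iff.mpr hξ
      set a := ‖ξ‖ with had
      set x := max (a - lam) 0 with hxd
      have hx0 : 0 ≤ x := le_max_right _ _
      have hxa : x ≤ a := max_le (by linarith) ha.le
      simp only [Hfun, if_neg hξ, if_true, eq_self_iff_true, sub_zero]
      rw [real_inner_smul_left, real_inner_self_eq_norm_sq, norm_smul, Real.norm_eq_abs,
        abs_of_nonneg (div_nonneg (Real.rpow_nonneg hx0 _) ha.le), mul_pow]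
      have e1 : (x ^ (p/2) / a) ^ 2 * a ^ 2 = (x ^ (p/2)) ^ 2 := by field_simp
      have e2 : x ^ (p-1) / a * a ^ 2 = x ^ (p-1) * a := by field_simp
      rw [e1, e2]
      have h2 := E2 p x 0 a 0 hp hx0 hxa le_rfl le_rfl
      rw [Real.zero_rpow hp2', Real.zero_rpow hp1'] at h2
      nlinarith [h2]
    · have ha : 0 < ‖ξ‖ := norm_pos_iff.mpr hξ
      have hb : 0 < ‖η‖ := norm_pos_iff.mpr hη
      set a := ‖ξ‖ with had
      set b := ‖η‖ with hbd
      set x := max (a - lam) 0 with hxd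
      set y := max (b - lam) 0 with hyd
      have hx0 : 0 ≤ x := le_max_right _ _
      have hy0 : 0 ≤ y := le_max_right _ _
      have hxa : x ≤ a := max_le (by linarith) ha.le
      have hyb : y ≤ b := max_le (by linarith) hb.le
      set c := (inner ℝ ξ η : ℝ) with hcd
      have hc : |c| ≤ a * b := abs_real_inner_le_norm ξ η
      set U := x ^ (p/2) with hUd
      set V := y ^ (p/2) with hVd
      set P := x ^ (p-1) with hPd
      set Q := y ^ (p-1) with hQd
      have hU0 : 0 ≤ U := Real.rpow_nonneg hx0 _
      have hV0 : 0 ≤ V := Real.rpow_nonneg hy0 _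
      simp only [Hfun, if_neg hξ, if_neg hη]
      rw [inner_comp, norm_comp n _ _ (div_nonneg hU0 ha.le) (div_nonneg hV0 hb.le)]
      have hE1 : 4 * (U - V) ^ 2 ≤ p ^ 2 * ((P - Q) * (a - b)) := by
        rcases le_total b a with hba | hab
        · have hyx : y ≤ x := max_le_max (by linarith) le_rfl
          have hlip : x - y ≤ a - b := by
            have : x ≤ (a - b) + y := max_le (by linarith [le_max_left (b - lam) (0:ℝ)])
              (add_nonneg (by linarith) hy0)
            linarith
          exact E1 p x y a b hp hy0 hyx hlip
        · have hxy : x ≤ y := max_le_max (by linarith) le_rfl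
          have hlip : y - x ≤ b - a := by
            have : y ≤ (b - a) + x := max_le (by linarith [le_max_left (a - lam) (0:ℝ)])
              (add_nonneg (by linarith) hx0)
            linarith
          have h := E1 p y x b a hp hx0 hxy hlip
          nlinarith [h]
      have hE2 : 4 * (U + V) ^ 2 ≤ p ^ 2 * ((P + Q) * (a + b)) :=
        E2 p x y a b hp hx0 hxa hy0 hyb
      have hkey := key p a b c P Q U V ha hb hc hE1 hE2
      have e1 : (U / a) ^ 2 * a ^ 2 = U ^ 2 := by field_simp
      have e2 : (V / b) ^ 2 * b ^ 2 = V ^ 2 := by field_simp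
      have e3 : 2 * (U / a) * (V / b) * c = 2 * U * V * (c / (a * b)) := by
        field_simp
      have e4 : P / a * a ^ 2 = P * a := by field_simp
      have e5 : Q / b * b ^ 2 = Q * b := by field_simp
      rw [e1, e2, e3, e4, e5]
      nlinarith [hkey]
end

section
/- For p ≥ 2, λ ≥ 0, and ξ, η ∈ ℝⁿ with |η| > λ, one has ⟨H_{p−1}(ξ) − H_{p−1}(η), ξ − η⟩ ≥ 2^{−(p+1)} (|η|−λ)^p / (|η|(|ξ|+|η|)) · |ξ − η|². -/
lemma aux_rpow {x y q : ℝ} (hy : 0 ≤ y) (hxy : y ≤ x) (hq : 0 ≤ q) :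
    x ^ q * (x - y) ≤ x ^ (q + 1) - y ^ (q + 1) := by
  rcases eq_or_lt_of_le hy with h0 | hy0
  · rw [← h0, Real.zero_rpow (by linarith : q + 1 ≠ 0)]
    rcases eq_or_lt_of_le (hy.trans hxy) with hx0 | hx0
    · rw [← hx0, Real.zero_rpow (by linarith : q + 1 ≠ 0)]; simp
    · rw [Real.rpow_add_one hx0.ne' q]; ring_nf; simp
  · have hx0 : 0 < x := lt_of_lt_of_le hy0 hxy
    rw [Real.rpow_add_one hx0.ne' q, Real.rpow_add_one hy0.ne' q]
    have h3 : y ^ q ≤ x ^ q := Real.rpow_le_rpow hy0.le hxy hq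
    nlinarith [Real.rpow_nonneg hy0.le q]

lemma endpoint_combine (a b s A B C D : ℝ) (ha : 0 < a) (hb : 0 < b) (hD : 0 < D)
    (hs1 : -(a * b) ≤ s) (hs2 : s ≤ a * b)
    (h1 : C * (a + b) ^ 2 ≤ (A + B) * (a + b) * D)
    (h2 : C * (a - b) ^ 2 ≤ (A - B) * (a - b) * D) :
    C / D * (a ^ 2 + b ^ 2 - 2 * s) ≤ A / a * (a ^ 2 - s) + B / b * (b ^ 2 - s) := by
  have hmain : C * (a ^ 2 + b ^ 2 - 2 * s) * (a * b) ≤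
      (A * b * (a ^ 2 - s) + B * a * (b ^ 2 - s)) * D := by
    linarith [mul_nonneg (by linarith : (0:ℝ) ≤ (A - B) * (a - b) * D - C * (a - b) ^ 2)
        (by linarith : (0:ℝ) ≤ a * b + s),
      mul_nonneg (by linarith : (0:ℝ) ≤ (A + B) * (a + b) * D - C * (a + b) ^ 2)
        (by linarith : (0:ℝ) ≤ a * b - s)]
  rw [show C / D * (a ^ 2 + b ^ 2 - 2 * s) = C * (a ^ 2 + b ^ 2 - 2 * s) / D from by ring,
    show A / a * (a ^ 2 - s) + B / b * (b ^ 2 - s)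
      = (A * b * (a ^ 2 - s) + B * a * (b ^ 2 - s)) / (a * b) from by field_simp,
    div_le_div_iff₀ hD (mul_pos ha hb)]
  linarith

lemma key_ineq (p lam a b s : ℝ) (hp : 2 ≤ p) (hlam : 0 ≤ lam) (ha : 0 ≤ a)
    (hb : lam < b) (hs : |s| ≤ a * b) :
    (2 : ℝ) ^ (-(p + 1)) * ((b - lam) ^ p / (b * (a + b))) * (a ^ 2 + b ^ 2 - 2 * s) ≤
      (max (a - lam) 0) ^ (p - 1) / a * (a ^ 2 - s) +
        (b - lam) ^ (p - 1) / b * (b ^ 2 - s) := by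
  have hb0 : 0 < b := lt_of_le_of_lt hlam hb
  have ht0 : 0 < b - lam := by linarith
  have htb : b - lam ≤ b := by linarith
  obtain ⟨T, hT⟩ : ∃ x, x = (b - lam) ^ (p - 2) := ⟨_, rfl⟩
  have hT0 : 0 < T := hT ▸ Real.rpow_pos_of_pos ht0 _
  have hBv : (b - lam) ^ (p - 1) = T * (b - lam) := by
    have h := Real.rpow_add_one ht0.ne' (p - 2)
    rw [show p - 2 + 1 = p - 1 from by ring] at h
    rw [h, ← hT]
  have htp : (b - lam) ^ p = T * (b - lam) * (b - lam) := by
    have h := Real.rpow_add_one ht0.ne' (p - 1)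
    rw [show p - 1 + 1 = p from by ring] at h
    rw [h, hBv]
  obtain ⟨E, hE⟩ : ∃ x, x = (2:ℝ) ^ (-(p + 1)) := ⟨_, rfl⟩
  have he0 : 0 < E := hE ▸ Real.rpow_pos_of_pos (by norm_num) _
  have he1 : E ≤ 1 := hE ▸ Real.rpow_le_one_of_one_le_of_nonpos (by norm_num) (by linarith)
  rw [← hE, htp, hBv]
  obtain ⟨hs1, hs2⟩ := abs_le.mp hs
  have hEt : E * (b - lam) ≤ b := by
    linarith [mul_nonneg (by linarith : (0:ℝ) ≤ 1 - E) ht0.le]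
  rcases eq_or_lt_of_le ha with ha0 | ha0
  · -- a = 0
    have hs0 : s = 0 := by
      rw [← ha0, zero_mul] at hs
      exact abs_nonpos_iff.mp hs
    rw [← ha0, hs0]
    have h1 : (max ((0:ℝ) - lam) 0) ^ (p - 1) / (0:ℝ) * ((0:ℝ) ^ 2 - 0) = 0 := by ring
    rw [h1]
    have l1 : E * (T * (b - lam) * (b - lam) / (b * ((0:ℝ) + b))) * ((0:ℝ) ^ 2 + b ^ 2 - 2 * 0)
        = E * (b - lam) * (T * (b - lam)) := by field_simp; ring
    have l2 : (0:ℝ) + T * (b - lam) / b * (b ^ 2 - 0) = b * (T * (b - lam)) := by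
      field_simp; ring
    rw [l1, l2]
    exact mul_le_mul_of_nonneg_right hEt (by positivity)
  · -- 0 < a
    have hab0 : 0 < a + b := by linarith
    obtain ⟨A, hA⟩ : ∃ x, x = (max (a - lam) 0) ^ (p - 1) := ⟨_, rfl⟩
    have hA0 : 0 ≤ A := hA ▸ Real.rpow_nonneg (le_max_right _ _) _
    rw [← hA]
    have hD1 : E * (b - lam) * (b - lam) ≤ b * (a + b) := by
      linarith [mul_le_mul_of_nonneg_right hEt ht0.le,
        mul_le_mul_of_nonneg_left htb hb0.le, mul_nonneg hb0.le ha]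
    -- endpoint inequality E1
    have h1 : E * (T * (b - lam) * (b - lam)) * (a + b) ^ 2
        ≤ (A + T * (b - lam)) * (a + b) * (b * (a + b)) := by
      have k1 := mul_le_mul_of_nonneg_left hEt
        (by positivity : (0:ℝ) ≤ T * (b - lam) * (a + b) ^ 2)
      have k2 : (0:ℝ) ≤ A * (a + b) * (b * (a + b)) := by positivity
      linarith [k1, k2]
    -- endpoint inequality E2
    have h2 : E * (T * (b - lam) * (b - lam)) * (a - b) ^ 2
        ≤ (A - T * (b - lam)) * (a - b) * (b * (a + b)) := by
      rcases le_or_gt lam a with hla | hla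
      · have hmax : max (a - lam) 0 = a - lam := max_eq_left (by linarith)
        have hsq : T * (a - b) ^ 2 ≤ (A - T * (b - lam)) * (a - b) := by
          rcases le_total b a with hba | hba
          · have h4 := aux_rpow (x := a - lam) (y := b - lam) ht0.le (by linarith)
              (by linarith : (0:ℝ) ≤ p - 2)
            have hb1 : (b - lam) ^ (p - 2 + 1) = T * (b - lam) := by
              rw [Real.rpow_add_one ht0.ne', ← hT]
            rw [hb1] at h4
            have hTx : T ≤ (a - lam) ^ (p - 2) :=
              hT ▸ Real.rpow_le_rpow ht0.le (by linarith) (by linarith)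
            have hAe : A = (a - lam) ^ (p - 2 + 1) := by
              rw [hA, hmax, show p - 2 + 1 = p - 1 from by ring]
            rw [hAe]
            have k1 := mul_le_mul_of_nonneg_right h4 (by linarith : (0:ℝ) ≤ a - b)
            have k2 := mul_le_mul_of_nonneg_right
              (mul_le_mul_of_nonneg_right hTx (by linarith : (0:ℝ) ≤ a - b))
              (by linarith : (0:ℝ) ≤ a - b)
            linarith [k1, k2]
          · have h4 := aux_rpow (x := b - lam) (y := a - lam) (by linarith) (by linarith)
              (by linarith : (0:ℝ) ≤ p - 2)
            have hb1 : (b - lam) ^ (p - 2 + 1) = T * (b - lam) := by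
              rw [Real.rpow_add_one ht0.ne', ← hT]
            rw [hb1, ← hT] at h4
            have hAe : A = (a - lam) ^ (p - 2 + 1) := by
              rw [hA, hmax, show p - 2 + 1 = p - 1 from by ring]
            rw [hAe]
            have k1 := mul_le_mul_of_nonneg_right h4 (by linarith : (0:ℝ) ≤ b - a)
            linarith [k1]
        have k1 := mul_le_mul_of_nonneg_right hsq (mul_pos hb0 hab0).le
        have k2 := mul_le_mul_of_nonneg_left hD1
          (by positivity : (0:ℝ) ≤ T * (a - b) ^ 2)
        linarith [k1, k2]
      · have hA0' : A = 0 := by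
          rw [hA, max_eq_right (by linarith), Real.zero_rpow (by linarith : p - 1 ≠ 0)]
        rw [hA0']
        have hD2 : E * (b - lam) * (b - a) ≤ b * (a + b) := by
          linarith [mul_le_mul_of_nonneg_right hEt (by linarith : (0:ℝ) ≤ b - a),
            mul_le_mul_of_nonneg_left (by linarith : b - a ≤ a + b) hb0.le]
        have k1 := mul_le_mul_of_nonneg_left hD2
          (mul_nonneg (mul_nonneg hT0.le ht0.le) (by linarith : (0:ℝ) ≤ b - a))
        linarith [k1]
    calc E * (T * (b - lam) * (b - lam) / (b * (a + b))) * (a ^ 2 + b ^ 2 - 2 * s)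
        = E * (T * (b - lam) * (b - lam)) / (b * (a + b)) * (a ^ 2 + b ^ 2 - 2 * s) := by
          ring
      _ ≤ A / a * (a ^ 2 - s) + T * (b - lam) / b * (b ^ 2 - s) :=
          endpoint_combine a b s A (T * (b - lam)) (E * (T * (b - lam) * (b - lam)))
            (b * (a + b)) ha0 hb0 (mul_pos hb0 hab0) hs1 hs2 h1 h2


theorem H_monotonicity_nondeg (n : ℕ) (p lam : ℝ) (hp : 2 ≤ p) (hlam : 0 ≤ lam)
    (ξ η : EuclideanSpace ℝ (Fin n)) (hη : lam < ‖η‖) :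
    (inner ℝ (Hfun n lam (p - 1) ξ - Hfun n lam (p - 1) η) (ξ - η) : ℝ) ≥
      (2 : ℝ) ^ (-(p + 1)) * ((‖η‖ - lam) ^ p / (‖η‖ * (‖ξ‖ + ‖η‖))) * ‖ξ - η‖ ^ 2 := by
  have hb0 : 0 < ‖η‖ := lt_of_le_of_lt hlam hη
  have hη0 : η ≠ 0 := by
    intro h; rw [h, norm_zero] at hb0; exact lt_irrefl 0 hb0
  have hHξ : Hfun n lam (p - 1) ξ = ((max (‖ξ‖ - lam) 0) ^ (p - 1) / ‖ξ‖) • ξ := by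
    simp only [Hfun]
    split_ifs with h
    · simp [h]
    · rfl
  have hHη : Hfun n lam (p - 1) η = ((‖η‖ - lam) ^ (p - 1) / ‖η‖) • η := by
    simp only [Hfun, if_neg hη0, max_eq_left (by linarith : (0:ℝ) ≤ ‖η‖ - lam)]
  have hinner : (inner ℝ (Hfun n lam (p - 1) ξ - Hfun n lam (p - 1) η) (ξ - η) : ℝ) =
      (max (‖ξ‖ - lam) 0) ^ (p - 1) / ‖ξ‖ * (‖ξ‖ ^ 2 - (inner ℝ ξ η : ℝ)) +
        (‖η‖ - lam) ^ (p - 1) / ‖η‖ * (‖η‖ ^ 2 - (inner ℝ ξ η : ℝ)) := by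
    rw [hHξ, hHη]
    simp only [inner_sub_left, inner_sub_right, real_inner_smul_left,
      real_inner_self_eq_norm_sq, real_inner_comm η ξ]
    ring
  have hnorm : ‖ξ - η‖ ^ 2 = ‖ξ‖ ^ 2 + ‖η‖ ^ 2 - 2 * (inner ℝ ξ η : ℝ) := by
    rw [norm_sub_sq_real]; ring
  rw [hinner, hnorm, ge_iff_le]
  exact key_ineq p lam ‖ξ‖ ‖η‖ (inner ℝ ξ η) hp hlam (norm_nonneg ξ) hη
    (abs_real_inner_le_norm ξ η)
end

section
/- Let p ≥ 2, λ ≥ 0, α ≥ 0. Define 𝒱_{α,λ}(ξ) = 𝒢_{α,λ}((|ξ|−λ)₊) ξ/|ξ| for |ξ| > λ and 𝒱_{α,λ}(ξ) = 0 for |ξ| ≤ λ, where 𝒢_{α,λ}(t) = ∫₀ᵗ ω^((p−1+2α)/2)(ω+λ)^(−(1+2α)/2) dω. Then there is a constant C = C(p) > 0 such that for all ξ, η ∈ ℝⁿ: |𝒱_{α,λ}(ξ) − 𝒱_{α,λ}(η)|² ≤ C ⟨H_{p−1}(ξ) − H_{p−1}(η), ξ − η⟩. -/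
noncomputable def Gfun (p α lam t : ℝ) : ℝ :=
  ∫ ω in (0:ℝ)..t, ω ^ ((p - 1 + 2 * α) / 2) / (ω + lam) ^ ((1 + 2 * α) / 2)

noncomputable def Vfun (n : ℕ) (p α lam : ℝ) (ξ : EuclideanSpace ℝ (Fin n)) :
    EuclideanSpace ℝ (Fin n) :=
  if lam < ‖ξ‖ then (Gfun p α lam (max (‖ξ‖ - lam) 0) / ‖ξ‖) • ξ else 0

section Aux

open MeasureTheory Set

variable {p α lam : ℝ}

private lemma integrand_nonneg (hlam : 0 ≤ lam) {ω : ℝ} (hω : 0 ≤ ω) :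
    0 ≤ ω ^ ((p - 1 + 2 * α) / 2) / (ω + lam) ^ ((1 + 2 * α) / 2) :=
  div_nonneg (Real.rpow_nonneg hω _) (Real.rpow_nonneg (by linarith) _)

private lemma integrand_le (hp : 2 ≤ p) (hα : 0 ≤ α) (hlam : 0 ≤ lam) {ω b : ℝ}
    (hω : 0 ≤ ω) (hωb : ω ≤ b) :
    ω ^ ((p - 1 + 2 * α) / 2) / (ω + lam) ^ ((1 + 2 * α) / 2) ≤ b ^ ((p - 2) / 2) := by
  rcases eq_or_lt_of_le hω with h0 | h0
  · rw [← h0, Real.zero_rpow (ne_of_gt (by linarith : (0:ℝ) < (p - 1 + 2*α)/2)), zero_div]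
    exact Real.rpow_nonneg (hω.trans hωb) _
  · have hb : (0:ℝ) < b := lt_of_lt_of_le h0 hωb
    have h1 : ω ^ ((p - 1 + 2 * α) / 2) / (ω + lam) ^ ((1 + 2 * α) / 2)
        ≤ ω ^ ((p - 1 + 2 * α) / 2) / ω ^ ((1 + 2 * α) / 2) := by
      exact div_le_div_of_nonneg_left (Real.rpow_nonneg h0.le _)
        (Real.rpow_pos_of_pos h0 _)
        (Real.rpow_le_rpow h0.le (by linarith) (by linarith))
    have h2 : ω ^ ((p - 1 + 2 * α) / 2) / ω ^ ((1 + 2 * α) / 2) = ω ^ ((p - 2) / 2) := by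
      rw [← Real.rpow_sub h0]
      ring_nf
    calc ω ^ ((p - 1 + 2 * α) / 2) / (ω + lam) ^ ((1 + 2 * α) / 2)
        ≤ ω ^ ((p - 2) / 2) := h1.trans_eq h2
      _ ≤ b ^ ((p - 2) / 2) := Real.rpow_le_rpow h0.le hωb (by linarith)

private lemma integrable_aux (hp : 2 ≤ p) (hα : 0 ≤ α) (hlam : 0 ≤ lam) {b : ℝ} (hb : 0 ≤ b) :
    IntervalIntegrable
      (fun ω => ω ^ ((p - 1 + 2 * α) / 2) / (ω + lam) ^ ((1 + 2 * α) / 2)) volume 0 b := by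
  rw [intervalIntegrable_iff]
  apply MeasureTheory.Integrable.mono' (g := fun _ => b ^ ((p - 2) / 2))
  · exact integrableOn_const (by rw [uIoc_of_le hb]; exact measure_Ioc_lt_top.ne)
  · exact ((by fun_prop : Measurable
      (fun ω : ℝ => ω ^ ((p - 1 + 2 * α) / 2) / (ω + lam) ^ ((1 + 2 * α) / 2)))).aestronglyMeasurable
  · rw [uIoc_of_le hb]
    filter_upwards [ae_restrict_mem measurableSet_Ioc] with ω hω
    rw [Real.norm_eq_abs, abs_of_nonneg (integrand_nonneg hlam hω.1.le)]
    exact integrand_le hp hα hlam hω.1.le hω.2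

private lemma Gfun_zero : Gfun p α lam 0 = 0 := intervalIntegral.integral_same

private lemma Gfun_sub_eq (hp : 2 ≤ p) (hα : 0 ≤ α) (hlam : 0 ≤ lam) {u v : ℝ}
    (hu : 0 ≤ u) (huv : u ≤ v) :
    Gfun p α lam v - Gfun p α lam u
      = ∫ ω in u..v, ω ^ ((p - 1 + 2 * α) / 2) / (ω + lam) ^ ((1 + 2 * α) / 2) := by
  exact intervalIntegral.integral_interval_sub_left
    (integrable_aux hp hα hlam (hu.trans huv)) (integrable_aux hp hα hlam hu)

private lemma Gfun_sub_nonneg (hp : 2 ≤ p) (hα : 0 ≤ α) (hlam : 0 ≤ lam) {u v : ℝ}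
    (hu : 0 ≤ u) (huv : u ≤ v) :
    0 ≤ Gfun p α lam v - Gfun p α lam u := by
  rw [Gfun_sub_eq hp hα hlam hu huv]
  exact intervalIntegral.integral_nonneg huv (fun x hx => integrand_nonneg hlam (hu.trans hx.1))

private lemma Gfun_sub_le (hp : 2 ≤ p) (hα : 0 ≤ α) (hlam : 0 ≤ lam) {u v : ℝ}
    (hu : 0 ≤ u) (huv : u ≤ v) :
    Gfun p α lam v - Gfun p α lam u ≤ (v - u) * v ^ ((p - 2) / 2) := by
  have hv : 0 ≤ v := hu.trans huv
  rw [Gfun_sub_eq hp hα hlam hu huv]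
  have hsub : uIcc u v ⊆ uIcc 0 v := by
    rw [uIcc_of_le huv, uIcc_of_le hv]
    exact Icc_subset_Icc hu le_rfl
  calc (∫ ω in u..v, ω ^ ((p - 1 + 2 * α) / 2) / (ω + lam) ^ ((1 + 2 * α) / 2))
      ≤ ∫ _ in u..v, v ^ ((p - 2) / 2) := by
        apply intervalIntegral.integral_mono_on huv
          ((integrable_aux hp hα hlam hv).mono_set hsub) intervalIntegrable_const
        exact fun x hx => integrand_le hp hα hlam (hu.trans hx.1) hx.2
    _ = (v - u) * v ^ ((p - 2) / 2) := by
        rw [intervalIntegral.integral_const, smul_eq_mul]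

private lemma Gfun_nonneg (hp : 2 ≤ p) (hα : 0 ≤ α) (hlam : 0 ≤ lam) {u : ℝ} (hu : 0 ≤ u) :
    0 ≤ Gfun p α lam u := by
  have := Gfun_sub_nonneg hp hα hlam le_rfl hu
  rwa [Gfun_zero, sub_zero] at this

private lemma Gfun_le (hp : 2 ≤ p) (hα : 0 ≤ α) (hlam : 0 ≤ lam) {u : ℝ} (hu : 0 ≤ u) :
    Gfun p α lam u ≤ u ^ (p / 2) := by
  have h := Gfun_sub_le hp hα hlam le_rfl hu
  rw [Gfun_zero, sub_zero, sub_zero] at h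
  refine h.trans (le_of_eq ?_)
  rw [show (p / 2 : ℝ) = 1 + (p - 2) / 2 by ring,
    Real.rpow_add' hu (by intro h'; nlinarith), Real.rpow_one]

-- u^(p-2) * u = u^(p-1) for u ≥ 0, given p ≥ 2
private lemma rpow_mul_self (hp : 2 ≤ p) {u : ℝ} (hu : 0 ≤ u) :
    u ^ (p - 2) * u = u ^ (p - 1) := by
  rw [show (p - 1 : ℝ) = (p - 2) + 1 by ring,
    Real.rpow_add' hu (by intro h'; nlinarith), Real.rpow_one]

private lemma key1 (hp : 2 ≤ p) (hα : 0 ≤ α) (hlam : 0 ≤ lam) {s t : ℝ}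
    (ht : 0 ≤ t) (hts : t ≤ s) :
    (Gfun p α lam (max (s - lam) 0) - Gfun p α lam (max (t - lam) 0)) ^ 2
      ≤ ((max (s - lam) 0) ^ (p - 1) - (max (t - lam) 0) ^ (p - 1)) * (s - t) := by
  set u := max (s - lam) 0 with hudef
  set v := max (t - lam) 0 with hvdef
  have hv : 0 ≤ v := le_max_right _ _
  have hvu : v ≤ u := max_le_max (by linarith) le_rfl
  have hu : 0 ≤ u := hv.trans hvu
  have hd1 : u - v ≤ s - t := by
    rw [hudef, hvdef]
    rcases le_total (s - lam) 0 with h | h <;> rcases le_total (t - lam) 0 with h' | h' <;>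
      simp [max_eq_right, max_eq_left, h, h'] <;> linarith
  have hG1 : 0 ≤ Gfun p α lam u - Gfun p α lam v := Gfun_sub_nonneg hp hα hlam hv hvu
  have hG2 : Gfun p α lam u - Gfun p α lam v ≤ (u - v) * u ^ ((p - 2) / 2) :=
    Gfun_sub_le hp hα hlam hv hvu
  have hsq : (u ^ ((p - 2) / 2)) ^ (2:ℕ) = u ^ (p - 2) := by
    rw [← Real.rpow_natCast (u ^ ((p - 2) / 2)) 2, ← Real.rpow_mul hu]
    norm_num
  have e1 : u ^ (p - 2) * u = u ^ (p - 1) := rpow_mul_self hp hu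
  have e2 : v ^ (p - 2) * v = v ^ (p - 1) := rpow_mul_self hp hv
  have e3 : v ^ (p - 2) ≤ u ^ (p - 2) := Real.rpow_le_rpow hv hvu (by linarith)
  have e4 : v ^ (p - 1) ≤ u ^ (p - 1) := Real.rpow_le_rpow hv hvu (by linarith)
  -- step A : (G u - G v)^2 ≤ (u-v)^2 * u^(p-2)
  have stepA : (Gfun p α lam u - Gfun p α lam v) ^ 2 ≤ (u - v) ^ 2 * u ^ (p - 2) := by
    calc (Gfun p α lam u - Gfun p α lam v) ^ 2
        ≤ ((u - v) * u ^ ((p - 2) / 2)) ^ 2 := by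
          apply pow_le_pow_left₀ hG1 hG2
      _ = (u - v) ^ 2 * (u ^ ((p - 2) / 2)) ^ 2 := by ring
      _ = (u - v) ^ 2 * u ^ (p - 2) := by rw [hsq]
  -- step B : u^(p-2) * (u - v) ≤ u^(p-1) - v^(p-1)
  have stepB : u ^ (p - 2) * (u - v) ≤ u ^ (p - 1) - v ^ (p - 1) := by
    have h5 : v ^ (p - 2) * v ≤ u ^ (p - 2) * v := mul_le_mul_of_nonneg_right e3 hv
    nlinarith [h5]
  have huv : 0 ≤ u - v := by linarith
  nlinarith [stepA, stepB, mul_le_mul_of_nonneg_left hd1 (mul_nonneg huv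
    (Real.rpow_nonneg hu (p-2))), mul_le_mul_of_nonneg_right stepB huv]

private lemma key2 (hp : 2 ≤ p) (hα : 0 ≤ α) (hlam : 0 ≤ lam) {s t : ℝ}
    (ht : 0 ≤ t) (hts : t ≤ s) :
    Gfun p α lam (max (s - lam) 0) * Gfun p α lam (max (t - lam) 0)
      ≤ (max (s - lam) 0) ^ (p - 1) * t + (max (t - lam) 0) ^ (p - 1) * s := by
  set u := max (s - lam) 0 with hudef
  set v := max (t - lam) 0 with hvdef
  have hv : 0 ≤ v := le_max_right _ _
  have hvu : v ≤ u := max_le_max (by linarith) le_rfl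
  have hu : 0 ≤ u := hv.trans hvu
  have hvt : v ≤ t := max_le (by linarith) ht
  have ea : Gfun p α lam u ≤ u ^ (p / 2) := Gfun_le hp hα hlam hu
  have eb : Gfun p α lam v ≤ v ^ (p / 2) := Gfun_le hp hα hlam hv
  have hb0 : 0 ≤ Gfun p α lam v := Gfun_nonneg hp hα hlam hv
  have split_v : v ^ (p / 2) = v ^ ((p - 2) / 2) * v := by
    rw [show (p / 2 : ℝ) = (p - 2) / 2 + 1 by ring,
      Real.rpow_add' hv (by intro h'; nlinarith), Real.rpow_one]
  have e3 : v ^ ((p - 2) / 2) ≤ u ^ ((p - 2) / 2) := Real.rpow_le_rpow hv hvu (by linarith)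
  have merge_u : u ^ (p / 2) * u ^ ((p - 2) / 2) = u ^ (p - 1) := by
    rw [← Real.rpow_add' hu (by intro h'; nlinarith)]
    congr 1
    ring
  calc Gfun p α lam u * Gfun p α lam v
      ≤ u ^ (p / 2) * v ^ (p / 2) := by
        apply mul_le_mul ea eb hb0 (Real.rpow_nonneg hu _)
    _ = u ^ (p / 2) * (v ^ ((p - 2) / 2) * v) := by rw [split_v]
    _ ≤ u ^ (p / 2) * (u ^ ((p - 2) / 2) * v) := by
        apply mul_le_mul_of_nonneg_left (mul_le_mul_of_nonneg_right e3 hv)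
          (Real.rpow_nonneg hu _)
    _ = u ^ (p - 1) * v := by rw [← merge_u]; ring
    _ ≤ u ^ (p - 1) * t := mul_le_mul_of_nonneg_left hvt (Real.rpow_nonneg hu _)
    _ ≤ u ^ (p - 1) * t + v ^ (p - 1) * s := by
        have : 0 ≤ v ^ (p - 1) * s := mul_nonneg (Real.rpow_nonneg hv _) (ht.trans hts)
        linarith

end Aux

theorem V_diff_bounded_by_H (p : ℝ) (hp : 2 ≤ p) :
    ∃ C > 0, ∀ (n : ℕ) (lam α : ℝ), 0 ≤ lam → 0 ≤ α →
      ∀ ξ η : EuclideanSpace ℝ (Fin n),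
        ‖Vfun n p α lam ξ - Vfun n p α lam η‖ ^ 2 ≤
          C * (inner ℝ (Hfun n lam (p - 1) ξ - Hfun n lam (p - 1) η) (ξ - η) : ℝ) := by
  refine ⟨2, by norm_num, ?_⟩
  intro n lam α hlam hα ξ η
  have hp1 : (p - 1 : ℝ) ≠ 0 := by intro h; nlinarith
  -- scalar representations
  have hVgen : ∀ ζ : EuclideanSpace ℝ (Fin n), ∃ w : ℝ, Vfun n p α lam ζ = w • ζ ∧ 0 ≤ w ∧
      w * ‖ζ‖ = Gfun p α lam (max (‖ζ‖ - lam) 0) := by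
    intro ζ
    refine ⟨Gfun p α lam (max (‖ζ‖ - lam) 0) / ‖ζ‖, ?_, ?_, ?_⟩
    · rw [Vfun]
      split_ifs with h
      · rfl
      · push_neg at h
        rw [max_eq_right (by linarith : ‖ζ‖ - lam ≤ 0), Gfun_zero, zero_div, zero_smul]
    · exact div_nonneg (Gfun_nonneg hp hα hlam (le_max_right _ _)) (norm_nonneg _)
    · rcases eq_or_ne ‖ζ‖ 0 with h0 | h0
      · rw [h0, mul_zero, show max ((0:ℝ) - lam) 0 = 0 from max_eq_right (by linarith),
          Gfun_zero]
      · exact div_mul_cancel₀ _ h0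
  have hHgen : ∀ ζ : EuclideanSpace ℝ (Fin n), ∃ q : ℝ, Hfun n lam (p - 1) ζ = q • ζ ∧ 0 ≤ q ∧
      q * ‖ζ‖ = (max (‖ζ‖ - lam) 0) ^ (p - 1) := by
    intro ζ
    refine ⟨(max (‖ζ‖ - lam) 0) ^ (p - 1) / ‖ζ‖, ?_, ?_, ?_⟩
    · rw [Hfun]
      split_ifs with h
      · rw [h, smul_zero]
      · rfl
    · exact div_nonneg (Real.rpow_nonneg (le_max_right _ _) _) (norm_nonneg _)
    · rcases eq_or_ne ‖ζ‖ 0 with h0 | h0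
      · rw [h0, mul_zero, show max ((0:ℝ) - lam) 0 = 0 from max_eq_right (by linarith),
          Real.zero_rpow hp1]
      · exact div_mul_cancel₀ _ h0
  obtain ⟨w1, hVξ, hw1n, hw1s⟩ := hVgen ξ
  obtain ⟨w2, hVη, hw2n, hw2s⟩ := hVgen η
  obtain ⟨q1, hHξ, hq1n, hq1s⟩ := hHgen ξ
  obtain ⟨q2, hHη, hq2n, hq2s⟩ := hHgen η
  set s := ‖ξ‖ with hsdef
  set t := ‖η‖ with htdef
  have hs0 : 0 ≤ s := norm_nonneg _
  have ht0 : 0 ≤ t := norm_nonneg _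
  set a := Gfun p α lam (max (s - lam) 0) with hadef
  set b := Gfun p α lam (max (t - lam) 0) with hbdef
  set A := (max (s - lam) 0) ^ (p - 1) with hAdef
  set B := (max (t - lam) 0) ^ (p - 1) with hBdef
  -- cosine
  set c : ℝ := if s * t = 0 then 0 else (inner ℝ ξ η : ℝ) / (s * t) with hcdef
  have hP : (inner ℝ ξ η : ℝ) = s * t * c := by
    rw [hcdef]
    split_ifs with h
    · rcases mul_eq_zero.1 h with h' | h'
      · rw [show ξ = 0 from norm_eq_zero.1 h', inner_zero_left]; ring
      · rw [show η = 0 from norm_eq_zero.1 h', inner_zero_right]; ring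
    · rw [mul_div_cancel₀ _ h]
  have hc1 : |c| ≤ 1 := by
    rw [hcdef]
    split_ifs with h
    · simp
    · rw [abs_div, abs_of_nonneg (le_of_lt (lt_of_le_of_ne (mul_nonneg hs0 ht0) (Ne.symm h))),
        div_le_one (lt_of_le_of_ne (mul_nonneg hs0 ht0) (Ne.symm h))]
      exact abs_real_inner_le_norm ξ η
  -- expand LHS
  have eL : ‖Vfun n p α lam ξ - Vfun n p α lam η‖ ^ 2 = a ^ 2 + b ^ 2 - 2 * (a * b * c) := by
    rw [hVξ, hVη, norm_sub_sq_real, real_inner_smul_left, real_inner_smul_right,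
      norm_smul, norm_smul, Real.norm_eq_abs, Real.norm_eq_abs,
      abs_of_nonneg hw1n, abs_of_nonneg hw2n, hP]
    linear_combination (w1 * s + a - 2 * c * (w2 * t)) * hw1s + (w2 * t + b - 2 * c * a) * hw2s
  -- expand RHS
  have eR : (inner ℝ (Hfun n lam (p - 1) ξ - Hfun n lam (p - 1) η) (ξ - η) : ℝ)
      = A * s + B * t - (A * t + B * s) * c := by
    have hP2 : (inner ℝ η ξ : ℝ) = s * t * c := by rw [real_inner_comm]; exact hP
    rw [hHξ, hHη, inner_sub_left, inner_sub_right, inner_sub_right,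
      real_inner_smul_left, real_inner_smul_left, real_inner_smul_left, real_inner_smul_left,
      real_inner_self_eq_norm_sq, real_inner_self_eq_norm_sq]
    rw [show (inner ℝ ξ η : ℝ) = s * t * c from hP, show (inner ℝ η ξ : ℝ) = s * t * c from hP2]
    linear_combination (s - c * t) * hq1s + (t - c * s) * hq2s
  clear_value s t a b A B c
  rw [eL, eR]
  -- key scalar facts
  have F1 : (a - b) ^ 2 ≤ (A - B) * (s - t) := by
    rcases le_total t s with h | h
    · have := key1 hp hα hlam ht0 h
      rw [← hadef, ← hbdef, ← hAdef, ← hBdef] at this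
      exact this
    · have := key1 hp hα hlam hs0 h
      rw [← hadef, ← hbdef, ← hAdef, ← hBdef] at this
      linarith [this, sq_nonneg (a-b), sq_nonneg (b-a), sq_abs (a-b)]
  have F2 : a * b ≤ A * t + B * s := by
    rcases le_total t s with h | h
    · have := key2 hp hα hlam ht0 h
      rw [← hadef, ← hbdef, ← hAdef, ← hBdef] at this
      exact this
    · have := key2 hp hα hlam hs0 h
      rw [← hadef, ← hbdef, ← hAdef, ← hBdef] at this
      linarith [this]
  have hc' : 0 ≤ 1 - c := by
    have := abs_le.1 hc1
    linarith [this.2]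
  have F3 : 0 ≤ (A - B) * (s - t) := le_trans (sq_nonneg _) F1
  have F4 : a * b * (1 - c) ≤ (A * t + B * s) * (1 - c) :=
    mul_le_mul_of_nonneg_right F2 hc'
  linarith [F1, F3, F4]
end
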